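/- Let p be a prime number and m ≥ 1 an integer. Then the polynomial f_{1,p^m}(X) is irreducible in ℤ[X]. -/

import Mathlib

open Polynomial

/-- `f1 n = X^(n-1) + 2 X^(n-2) + ⋯ + (n-1) X + n = Σ_{k=1}^n k · X^(n-k)` over `ℤ`. -/
noncomputable def f1 (n : ℕ) : Polynomial ℤ :=
  ∑ k ∈ Finset.Icc 1 n, C (k : ℤ) * X ^ (n - k)


lemma f1_zero : f1 0 = 0 := by simp [f1]

lemma f1_succ (n : ℕ) : f1 (n + 1) = X * f1 n + C ((n : ℤ) + 1) := by
  rw [f1, f1, Finset.sum_Icc_succ_top (by omega : 1 ≤ n + 1), Finset.mul_sum]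
  congr 1
  · refine Finset.sum_congr rfl fun k hk => ?_
    simp only [Finset.mem_Icc] at hk
    rw [show n + 1 - k = (n - k) + 1 by omega, pow_succ]
    ring
  · simp

lemma f1_monic_deg (n : ℕ) (hn : 1 ≤ n) :
    (f1 n).Monic ∧ (f1 n).natDegree = n - 1 := by
  induction n with
  | zero => omega
  | succ n ih =>
    rcases Nat.eq_or_lt_of_le hn with h | h
    · have h1 : f1 1 = C 1 := by rw [show (1:ℕ) = 0 + 1 from rfl, f1_succ, f1_zero]; simp
      simp only [← h, h1]
      exact ⟨by simpa using monic_one, by simp⟩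
    · have hn1 : 1 ≤ n := by omega
      obtain ⟨hm, hd⟩ := ih hn1
      have hmX : (X * f1 n).Monic := (monic_X).mul hm
      have hdX : (X * f1 n).natDegree = n := by
        rw [natDegree_mul X_ne_zero hm.ne_zero, natDegree_X, hd]; omega
      have hlt : (C ((n : ℤ) + 1)).degree < (X * f1 n).degree := by
        apply lt_of_le_of_lt degree_C_le
        rw [degree_eq_natDegree hmX.ne_zero, hdX]
        exact_mod_cast Nat.cast_pos.mpr (by omega)
      rw [f1_succ]
      refine ⟨hmX.add_of_left hlt, ?_⟩
      rw [natDegree_add_eq_left_of_degree_lt hlt, hdX]; omega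

lemma f1_coeff_zero (n : ℕ) : (f1 n).coeff 0 = (n : ℤ) := by
  induction n with
  | zero => simp [f1_zero]
  | succ n ih => rw [f1_succ]; simp [coeff_X_mul]

lemma f1_coeff_one (n : ℕ) (hn : 2 ≤ n) : (f1 n).coeff 1 = (n : ℤ) - 1 := by
  obtain ⟨k, rfl⟩ : ∃ k, n = k + 1 := ⟨n - 1, by omega⟩
  rw [f1_succ]
  have : (C ((k:ℤ)+1)).coeff 1 = 0 := by simp [coeff_C, coeff_one]
  rw [coeff_add, this, add_zero, coeff_X_mul, f1_coeff_zero]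
  push_cast; ring

lemma geom_key (n : ℕ) :
    (X - 1) * (∑ j ∈ Finset.Icc 1 n, X ^ j) = X ^ (n + 1) - (X : ℤ[X]) := by
  induction n with
  | zero => simp
  | succ n ih =>
    rw [Finset.sum_Icc_succ_top (by omega : 1 ≤ n + 1), mul_add]
    rw [ih]; ring

lemma f1_key (n : ℕ) :
    (X - 1) * f1 n = (∑ j ∈ Finset.Icc 1 n, X ^ j) - C (n : ℤ) := by
  induction n with
  | zero => simp [f1_zero]
  | succ n ih =>
    rw [f1_succ, Finset.sum_Icc_succ_top (by omega : 1 ≤ n + 1)]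
    have h2 : (X - 1) * (X * f1 n) = X * ((X - 1) * f1 n) := by ring
    rw [mul_add, h2, ih]
    have := geom_key n
    push_cast [C_add, C_1]
    linear_combination this

lemma f1_root_abs (n : ℕ) (hn : 1 ≤ n) (z : ℂ) (hz : aeval z (f1 n) = 0) :
    1 < ‖z‖ := by
  by_contra hle
  push_neg at hle
  have key : ∑ j ∈ Finset.Icc 1 n, z ^ j = (n : ℂ) := by
    have h := congrArg (aeval z) (f1_key n)
    simp only [map_mul, map_sub, map_sum, map_pow, aeval_X, aeval_C, map_one, hz,
      mul_zero] at h
    have h2 : (0 : ℂ) = (∑ j ∈ Finset.Icc 1 n, z ^ j) - (n : ℂ) := by exact_mod_cast h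
    linear_combination -h2
  -- each real part ≤ 1
  have hre : ∀ j ∈ Finset.Icc 1 n, (z ^ j).re ≤ 1 := by
    intro j hj
    refine le_trans (Complex.re_le_norm _) ?_
    rw [norm_pow]
    exact pow_le_one₀ (norm_nonneg z) hle
  -- sum of real parts = n
  have hsum : ∑ j ∈ Finset.Icc 1 n, (1 - (z ^ j).re) = 0 := by
    have := congrArg Complex.re key
    rw [Complex.re_sum] at this
    simp only [Complex.natCast_re] at this
    rw [Finset.sum_sub_distrib, this, Finset.sum_const, Nat.card_Icc]
    simp
  have hall := (Finset.sum_eq_zero_iff_of_nonneg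
    (fun j hj => by linarith [hre j hj])).mp hsum
  have h1 : (1 : ℕ) ∈ Finset.Icc 1 n := by simp [hn]
  have hz1 : z.re = 1 := by have := hall 1 h1; simp at this; linarith
  -- hence z = 1
  have habs1 : ‖z‖ = 1 := le_antisymm hle (hz1 ▸ Complex.re_le_norm z)
  have him : z.im = 0 := by
    have := Complex.sq_norm z
    rw [habs1, Complex.normSq_apply, hz1] at this
    nlinarith
  have hzeq : z = 1 := Complex.ext (by simp [hz1]) (by simp [him])
  -- but f1 n has positive value at 1
  rw [hzeq] at hz
  have : (aeval (1:ℂ)) (f1 n) = ((∑ k ∈ Finset.Icc 1 n, k : ℕ) : ℂ) := by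
    simp [f1, map_sum]
  rw [this] at hz
  have hpos : 0 < ∑ k ∈ Finset.Icc 1 n, k :=
    lt_of_lt_of_le one_pos (Finset.single_le_sum (f := fun k => k)
      (fun i _ => Nat.zero_le i) (by simp [hn]))
  exact_mod_cast absurd hz (by exact_mod_cast Nat.cast_ne_zero.mpr hpos.ne')

lemma multiset_prod_big (s : Multiset ℝ) (hs : s ≠ 0) (h : ∀ x ∈ s, (1:ℝ) < x) :
    1 < s.prod := by
  induction s using Multiset.induction with
  | empty => simp at hs
  | cons a t ih =>
    rw [Multiset.prod_cons]
    have ha : 1 < a := h a (Multiset.mem_cons_self a t)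
    rcases eq_or_ne t 0 with rfl | ht
    · simpa using ha
    · have htp : 1 < t.prod := ih ht fun x hx => h x (Multiset.mem_cons_of_mem hx)
      nlinarith

lemma factor_coeff_big (n : ℕ) (hn : 1 ≤ n) (a : Polynomial ℤ) (ha : a ∣ f1 n)
    (hd : 1 ≤ a.natDegree) (hlc : IsUnit a.leadingCoeff) :
    1 < (a.coeff 0).natAbs := by
  have hinj : Function.Injective (Int.castRingHom ℂ) := fun x y h =>
    Int.cast_injective h
  set A := a.map (Int.castRingHom ℂ) with hA
  have hane : a ≠ 0 := fun h => by simp [h] at hd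
  have hA0 : A ≠ 0 := (Polynomial.map_ne_zero_iff hinj).mpr hane
  have hsplit : Splits A := IsAlgClosed.splits A
  have hdegA : A.natDegree = a.natDegree := natDegree_map_eq_of_injective hinj a
  have hcard : A.roots.card = A.natDegree := splits_iff_card_roots.mp hsplit
  have hroots : ∀ r ∈ A.roots, 1 < ‖r‖ := by
    intro r hr
    have h2 := (mem_roots hA0).mp hr
    have hr' : aeval r a = 0 := by
      rwa [IsRoot.def, hA, eval_map, ← algebraMap_int_eq, ← aeval_def] at h2
    obtain ⟨c, hc⟩ := ha
    exact f1_root_abs n hn r (by rw [hc, map_mul, hr', zero_mul])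
  have hprodeq := hsplit.eq_prod_roots
  have heval := congrArg (eval 0) hprodeq
  rw [eval_mul, eval_C, eval_multiset_prod, Multiset.map_map] at heval
  have habs := congrArg (normHom : ℂ →*₀ ℝ) heval
  rw [map_mul, map_multiset_prod, Multiset.map_map] at habs
  rcases Int.isUnit_iff.mp hlc with h | h
  all_goals {
    have hlcabs : (normHom : ℂ →*₀ ℝ) A.leadingCoeff = 1 := by
      rw [hA, leadingCoeff_map_of_leadingCoeff_ne_zero _ (by rw [h]; norm_num), h]
      simp
    have hbig : ∀ x ∈ A.roots.map (⇑(normHom : ℂ →*₀ ℝ) ∘ eval 0 ∘ fun r => X - C r),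
        (1:ℝ) < x := by
      intro x hx
      obtain ⟨r, hr, rfl⟩ := Multiset.mem_map.mp hx
      simpa using hroots r hr
    have hne : A.roots.map (⇑(normHom : ℂ →*₀ ℝ) ∘ eval 0 ∘ fun r => X - C r) ≠ 0 := by
      rw [Ne, Multiset.map_eq_zero, ← Multiset.card_eq_zero, hcard, hdegA]
      omega
    have hprod := multiset_prod_big _ hne hbig
    rw [hlcabs, one_mul] at habs
    have hev : eval 0 A = ((a.coeff 0 : ℤ) : ℂ) := by
      rw [← coeff_zero_eq_eval_zero, hA, coeff_map]
      rfl
    rw [hev] at habs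
    rw [normHom_apply, Complex.norm_intCast] at habs
    have h1 : (1:ℤ) < |a.coeff 0| := by
      have : (1:ℝ) < |((a.coeff 0 : ℤ) : ℝ)| := habs ▸ hprod
      exact_mod_cast (by push_cast at this ⊢; exact this : (1:ℝ) < ((|a.coeff 0| : ℤ) : ℝ))
    rw [Int.abs_eq_natAbs] at h1
    exact_mod_cast h1
  }

/-- If `p` is prime and `m ≥ 1`, then `f1 (p^m)` is irreducible in `ℤ[X]`. -/
theorem stmt6 (p m : ℕ) (hp : p.Prime) (hm : 1 ≤ m) : Irreducible (f1 (p ^ m)) := by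
  set n := p ^ m with hn
  have hpn : p ≤ n := Nat.le_self_pow (by omega) p
  have hn2 : 2 ≤ n := le_trans hp.two_le hpn
  have hn1 : 1 ≤ n := by omega
  obtain ⟨hmon, hdeg⟩ := f1_monic_deg n hn1
  constructor
  · intro hu
    have := natDegree_eq_zero_of_isUnit hu
    omega
  · intro a b hab
    by_contra hcon
    push_neg at hcon
    obtain ⟨hua, hub⟩ := hcon
    have hlc : a.leadingCoeff * b.leadingCoeff = 1 := by
      have h := hmon
      rw [Monic, hab, leadingCoeff_mul] at h
      exact h
    have hlca : IsUnit a.leadingCoeff := IsUnit.of_mul_eq_one _ hlc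
    have hlcb : IsUnit b.leadingCoeff :=
      IsUnit.of_mul_eq_one _ (by rw [mul_comm]; exact hlc)
    have hane : a ≠ 0 := fun h => by simp [h] at hab; exact hmon.ne_zero (hab ▸ rfl)
    have hbne : b ≠ 0 := fun h => by simp [h] at hab; exact hmon.ne_zero (hab ▸ rfl)
    have hda : 1 ≤ a.natDegree := by
      by_contra h
      push_neg at h
      have h0 : a.natDegree = 0 := by omega
      have hCa : a = C (a.coeff 0) := eq_C_of_natDegree_eq_zero h0
      exact hua (hCa ▸ isUnit_C.mpr (by rwa [leadingCoeff, h0] at hlca))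
    have hdb : 1 ≤ b.natDegree := by
      by_contra h
      push_neg at h
      have h0 : b.natDegree = 0 := by omega
      have hCb : b = C (b.coeff 0) := eq_C_of_natDegree_eq_zero h0
      exact hub (hCb ▸ isUnit_C.mpr (by rwa [leadingCoeff, h0] at hlcb))
    -- constant coefficients
    have hc0 : a.coeff 0 * b.coeff 0 = (n : ℤ) := by
      rw [← mul_coeff_zero, ← hab, f1_coeff_zero]
    have hba : 1 < (a.coeff 0).natAbs :=
      factor_coeff_big n hn1 a ⟨b, hab⟩ hda hlca
    have hbb : 1 < (b.coeff 0).natAbs :=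
      factor_coeff_big n hn1 b ⟨a, by rw [hab, mul_comm]⟩ hdb hlcb
    -- p divides both constant coefficients
    have hdvd : ∀ c : ℤ, 1 < c.natAbs → c ∣ (n : ℤ) → (p : ℤ) ∣ c := by
      intro c h1 h2
      have h3 : c.natAbs ∣ n := by
        have := Int.natAbs_dvd_natAbs.mpr h2
        simpa using this
      rw [hn] at h3
      obtain ⟨i, hi, hia⟩ := (Nat.dvd_prime_pow hp).mp h3
      have hi1 : 1 ≤ i := by
        rcases Nat.eq_zero_or_pos i with rfl | h
        · simp at hia; omega
        · exact h
      have : p ∣ c.natAbs := hia ▸ dvd_pow_self p (by omega)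
      exact Int.dvd_natAbs.mp (Int.natCast_dvd_natCast.mpr this)
    have hpa : (p : ℤ) ∣ a.coeff 0 := hdvd _ hba ⟨b.coeff 0, hc0.symm⟩
    have hpb : (p : ℤ) ∣ b.coeff 0 := hdvd _ hbb ⟨a.coeff 0, by rw [← hc0]; ring⟩
    -- coefficient of X
    have hc1 : a.coeff 0 * b.coeff 1 + a.coeff 1 * b.coeff 0 = (n : ℤ) - 1 := by
      rw [← f1_coeff_one n hn2, hab, coeff_mul]
      rw [Finset.Nat.sum_antidiagonal_eq_sum_range_succ_mk]
      simp [Finset.sum_range_succ]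
    have hp1 : (p : ℤ) ∣ (n : ℤ) - 1 := by
      rw [← hc1]
      exact dvd_add (Dvd.dvd.mul_right hpa _) (Dvd.dvd.mul_left hpb _)
    have hpn' : (p : ℤ) ∣ (n : ℤ) := by
      rw [hn]; push_cast; exact dvd_pow_self _ (by omega)
    have : (p : ℤ) ∣ 1 := by simpa using dvd_sub hpn' hp1
    have := Int.le_of_dvd one_pos this
    have h2 := hp.two_le
    omega
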